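/- Let d > 1 be a squarefree positive integer and F = ℚ(√d), with conjugation x ↦ x̄. If γ ∈ 𝒪_F satisfies 0 ≤ γ̄ < 1 (as a real number under the embedding with √d > 0), then there is a unique a ∈ ℤ such that γ = −⌊a·ω̄_d⌋ + a·ω_d, and moreover 0 ≤ γ − a·√(Δ_d) ≤ 1. -/

import Mathlib

noncomputable section

/-- `Δ_d`: the discriminant of `ℚ(√d)` for squarefree `d > 1`. -/
def Delta (d : ℕ) : ℕ := if d % 4 = 1 then d else 4 * d

/-- `ω_d`, viewed as a real number (with `√d > 0`). -/
def omegaR (d : ℕ) : ℝ := if d % 4 = 1 then (1 + Real.sqrt d) / 2 else Real.sqrt d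

/-- The conjugate `ω̄_d`, viewed as a real number. -/
def omegaConjR (d : ℕ) : ℝ := if d % 4 = 1 then (1 - Real.sqrt d) / 2 else -Real.sqrt d

/-- `F = ℚ(√d)`, realized as an intermediate field of `ℝ/ℚ` via the embedding with `√d > 0`. -/
def Fd (d : ℕ) : IntermediateField ℚ ℝ := IntermediateField.adjoin ℚ {Real.sqrt d}

/-- The ring of integers `𝒪_F` of `F = ℚ(√d)`. -/
abbrev Od (d : ℕ) := NumberField.RingOfIntegers (Fd d)

/-- An element of `F` is totally positive if its image under each of the
(two) real embeddings of `F` is positive. -/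
def TotPos {d : ℕ} (x : Fd d) : Prop := ∀ σ : Fd d →ₐ[ℚ] ℝ, 0 < σ x

/-- The conjugate `x̄` of `x ∈ F = ℚ(√d)`, as a real number: `x̄ = tr(x) - x`. -/
def conjR {d : ℕ} (x : Fd d) : ℝ := ((Algebra.trace ℚ (Fd d) x : ℚ) : ℝ) - (x : ℝ)

/-- A (not necessarily classic) quadratic `𝒪_F`-lattice: a finitely generated
`𝒪_F`-module `L` with a quadratic map `Q : L → 𝒪_F` whose associated form
`B(x,y) = (Q(x+y)-Q(x)-Q(y))/2` (with values a priori in `F`) is symmetric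
bilinear and satisfies `B(x,x) = Q(x)`. -/
structure QuadLattice (d : ℕ) where
  carrier : Type
  [isAddCommGroup : AddCommGroup carrier]
  [isModule : Module (Od d) carrier]
  finite : Module.Finite (Od d) carrier
  Q : carrier → Od d
  B : carrier → carrier → Fd d
  B_symm : ∀ x y, B x y = B y x
  B_add_left : ∀ x y z, B (x + y) z = B x z + B y z
  B_smul_left : ∀ (a : Od d) (x y : carrier), B (a • x) y = (a : Fd d) * B x y
  B_self : ∀ x, B x x = (Q x : Fd d)
  B_def : ∀ x y, 2 * B x y = (Q (x + y) : Fd d) - (Q x : Fd d) - (Q y : Fd d)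

attribute [instance] QuadLattice.isAddCommGroup QuadLattice.isModule

namespace QuadLattice

variable {d : ℕ} (L : QuadLattice d)

/-- `L` is classic if the bilinear form takes values in `𝒪_F`. -/
def IsClassic : Prop := ∀ x y, L.B x y ∈ integralClosure ℤ (Fd d)

/-- `L` is positive definite if `Q(x)` is totally positive for all `x ≠ 0`. -/
def PosDef : Prop := ∀ x : L.carrier, x ≠ 0 → TotPos (L.Q x : Fd d)

/-- `L` is universal if `Q(L) = 𝒪_F⁺ ∪ {0}`. -/
def Universal : Prop :=
  (Set.range fun v => L.Q v) = {a : Od d | TotPos (a : Fd d)} ∪ {0}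

end QuadLattice

namespace Aux
variable {d : ℕ}

lemma irr (hd : Squarefree d) (hd1 : 1 < d) : Irrational (Real.sqrt d) := by
  rw [irrational_sqrt_natCast_iff]
  rintro ⟨k, hk⟩
  have hu := hd k (dvd_of_eq hk.symm)
  rw [Nat.isUnit_iff] at hu
  subst hu; simp at hk; omega

def sd (d : ℕ) : Fd d := ⟨Real.sqrt d, IntermediateField.subset_adjoin ℚ _ rfl⟩

lemma sd_coe : ((sd d : Fd d) : ℝ) = Real.sqrt d := rfl

lemma coe_ext {x y : Fd d} (h : (x : ℝ) = (y : ℝ)) : x = y := Subtype.ext h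

lemma sqd (hd1 : 1 < d) : Real.sqrt d * Real.sqrt d = d :=
  Real.mul_self_sqrt (by positivity)

lemma rep (hirr : Irrational (Real.sqrt d)) (hd1 : 1 < d) (γ : Fd d) :
    ∃ p q : ℚ, (γ : ℝ) = p + q * Real.sqrt d := by
  have hs := sqd (d := d) hd1
  have h2 : (γ:ℝ) ∈ IntermediateField.adjoin ℚ {Real.sqrt d} := γ.2
  refine IntermediateField.adjoin_induction
    (p := fun x _ => ∃ p q : ℚ, x = p + q * Real.sqrt d)
    (mem := ?_) (algebraMap := ?_) (add := ?_) (inv := ?_) (mul := ?_) (h := h2)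
  · rintro x hx
    exact ⟨0, 1, by simp [Set.mem_singleton_iff.mp hx]⟩
  · exact fun x => ⟨x, 0, by simp⟩
  · rintro x y hx hy ⟨p, q, hpq⟩ ⟨p', q', hpq'⟩
    exact ⟨p + p', q + q', by push_cast; rw [hpq, hpq']; ring⟩
  · rintro x hx ⟨p, q, hpq⟩
    by_cases h0 : x = 0
    · exact ⟨0, 0, by simp [h0]⟩
    · have hden : (p : ℝ) ^ 2 - q ^ 2 * d ≠ 0 := by
        intro h
        rcases eq_or_ne q 0 with hq | hq
        · apply h0
          rw [hpq]
          simp only [hq] at h ⊢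
          push_cast at h ⊢
          have : (p : ℝ) = 0 := by nlinarith
          simp [this]
        · have hq' : (q : ℝ) ≠ 0 := by exact_mod_cast hq
          have h1 : ((p:ℝ)/q)^2 = d := by field_simp; nlinarith
          have h3 : Real.sqrt (d:ℝ) = |(p:ℝ)/q| := by rw [← h1, Real.sqrt_sq_eq_abs]
          exact hirr ⟨|p/q|, by push_cast; rw [h3]⟩
      have hDQ : (p^2 - q^2*d : ℚ) ≠ 0 := by
        intro h
        apply hden
        have := congrArg (fun r : ℚ => (r : ℝ)) h
        push_cast at this
        linarith
      refine ⟨p / (p^2 - q^2*d), -q / (p^2 - q^2*d), ?_⟩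
      rw [hpq]
      refine inv_eq_of_mul_eq_one_right ?_
      have hDR : ((p:ℝ)^2 - q^2*d : ℝ) ≠ 0 := by exact_mod_cast hDQ
      push_cast
      field_simp
      ring_nf
      nlinarith [hs]
  · rintro x y hx hy ⟨p, q, hpq⟩ ⟨p', q', hpq'⟩
    exact ⟨p * p' + q * q' * d, p * q' + q * p', by
      push_cast
      rw [hpq, hpq']
      linear_combination (q : ℝ) * q' * hs⟩

lemma smul_coe (q : ℚ) (x : Fd d) : ((q • x : Fd d) : ℝ) = (q : ℝ) * (x : ℝ) := by
  push_cast
  rw [Rat.smul_def]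

lemma rep_eq (hirr : Irrational (Real.sqrt d)) (γ : Fd d) (p q : ℚ)
    (h : (γ : ℝ) = p + q * Real.sqrt d) : γ = p • (1 : Fd d) + q • sd d := by
  apply coe_ext
  push_cast [smul_coe]
  rw [h]
  simp [sd, Rat.smul_def]

def bb (hirr : Irrational (Real.sqrt d)) (hd1 : 1 < d) : Module.Basis (Fin 2) ℚ (Fd d) :=
  Module.Basis.mk (v := ![1, sd d])
    (by
      rw [linearIndependent_fin2]
      constructor
      · intro h
        have : ((sd d : Fd d) : ℝ) = 0 := by rw [show ![(1:Fd d), sd d] 1 = sd d from rfl] at h; rw [h]; rfl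
        have : Real.sqrt d = 0 := this
        have : (d:ℝ) = 0 := by rw [← sqd hd1, this]; ring
        have : (0:ℕ) < d := by omega
        simp_all
      · intro a h
        apply hirr
        refine ⟨a⁻¹, ?_⟩
        have h' := congrArg (fun x : Fd d => (x : ℝ)) h
        simp only [smul_coe] at h'
        have h1 : (a : ℝ) * Real.sqrt d = 1 := h'
        have ha : (a : ℝ) ≠ 0 := by
          intro h0; rw [h0] at h1; simp at h1
        push_cast
        field_simp
        linarith [h1])
    (by
      rintro γ -
      obtain ⟨p, q, hpq⟩ := rep hirr hd1 γ
      rw [rep_eq hirr γ p q hpq]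
      exact add_mem (Submodule.smul_mem _ _ (Submodule.subset_span ⟨0, rfl⟩))
        (Submodule.smul_mem _ _ (Submodule.subset_span ⟨1, rfl⟩)))

lemma trace_eq (hirr : Irrational (Real.sqrt d)) (hd1 : 1 < d) (γ : Fd d) (p q : ℚ) (h : (γ : ℝ) = p + q * Real.sqrt d) :
    Algebra.trace ℚ (Fd d) γ = 2 * p := by
  classical
  rw [Algebra.trace_eq_matrix_trace (bb hirr hd1) γ, Matrix.trace_fin_two]
  have hb0 : bb hirr hd1 0 = 1 := by simp [bb]
  have hb1 : bb hirr hd1 1 = sd d := by simp [bb]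
  have e0 : γ * bb hirr hd1 0 = p • bb hirr hd1 0 + q • bb hirr hd1 1 := by
    rw [hb0, hb1, mul_one]
    exact rep_eq hirr γ p q h
  have e1 : γ * bb hirr hd1 1 = (q * d) • bb hirr hd1 0 + p • bb hirr hd1 1 := by
    rw [hb0, hb1]
    apply coe_ext
    push_cast
    rw [Rat.smul_def, Rat.smul_def, show ((sd d : Fd d):ℝ) = Real.sqrt d from rfl, h]
    push_cast
    linear_combination (q : ℝ) * sqd hd1
  rw [Algebra.leftMulMatrix_eq_repr_mul, Algebra.leftMulMatrix_eq_repr_mul, e0, e1]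
  simp [Finsupp.single_apply]
  ring

lemma not_four_dvd (hd : Squarefree d) : ¬ (4 ∣ d) := by
  rintro ⟨c, hc⟩
  have := hd 2 ⟨c, by omega⟩
  rw [Nat.isUnit_iff] at this
  omega

lemma int_rep (hd : Squarefree d) (hd1 : 1 < d) (γ : Fd d) (hγ : IsIntegral ℤ γ) :
    ∃ x a : ℤ, (γ : ℝ) = x + a * omegaR d ∧ conjR γ = x + a * omegaConjR d := by
  have hirr := irr hd hd1
  obtain ⟨p, q, hpq⟩ := rep hirr hd1 γ
  haveI : FiniteDimensional ℚ (Fd d) := Module.Finite.of_basis (bb hirr hd1)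
  obtain ⟨m, hm⟩ := IsIntegrallyClosed.isIntegral_iff.mp
    (Algebra.isIntegral_trace (R := ℤ) (L := ℚ) (F := Fd d) hγ)
  have htr := trace_eq hirr hd1 γ p q hpq
  have hm2 : (m : ℚ) = 2 * p := by rw [← htr, ← hm]; simp
  -- the "norm" n = p^2 - q^2 d is an integer
  have hmint : IsIntegral ℤ (((m : ℤ) : Fd d)) :=
    (eq_intCast (algebraMap ℤ (Fd d)) m) ▸ isIntegral_algebraMap
  have hδ : IsIntegral ℤ (γ * (((m : ℤ) : Fd d) - γ)) := hγ.mul (hmint.sub hγ)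
  have hδval : γ * (((m : ℤ) : Fd d) - γ) = algebraMap ℚ (Fd d) (p^2 - q^2*d) := by
    apply coe_ext
    have halg : ((algebraMap ℚ (Fd d) (p^2 - q^2*d) : Fd d) : ℝ) = ((p^2 - q^2*d : ℚ) : ℝ) := rfl
    rw [halg]
    push_cast
    rw [hpq]
    have hmr : (m : ℝ) = 2 * p := by exact_mod_cast hm2
    rw [hmr]
    linear_combination (-(q:ℝ)^2) * sqd hd1
  rw [hδval] at hδ
  obtain ⟨n, hn⟩ := IsIntegrallyClosed.isIntegral_iff.mp
    ((isIntegral_algebraMap_iff (algebraMap ℚ (Fd d)).injective).mp hδ)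
  have hn2 : (n : ℚ) = p^2 - q^2*d := by rw [← hn]; simp
  -- k = m² - 4n = (2q)² d
  obtain ⟨k, hk_def⟩ : ∃ k : ℤ, k = m^2 - 4*n := ⟨_, rfl⟩
  have hk : (k : ℚ) = 4*q^2*d := by
    rw [hk_def]; push_cast
    linear_combination ((m:ℚ) + 2*p) * hm2 - 4 * hn2
  -- 2qd is an integer t
  have hInt : IsIntegral ℤ ((2*q*d : ℚ)) := by
    refine ⟨Polynomial.X^2 - Polynomial.C (k*d),
      Polynomial.monic_X_pow_sub_C _ two_ne_zero, ?_⟩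
    simp only [Polynomial.eval₂_sub, Polynomial.eval₂_X_pow, Polynomial.eval₂_C]
    rw [eq_intCast (algebraMap ℤ ℚ)]
    push_cast
    linear_combination (-(d:ℚ)) * hk
  obtain ⟨t, ht⟩ := IsIntegrallyClosed.isIntegral_iff.mp hInt
  have ht2 : (t : ℚ) = 2*q*d := by rw [← ht]; simp
  have htk : t^2 = k*d := by
    have h' : ((t^2 : ℤ) : ℚ) = ((k*d : ℤ) : ℚ) := by
      push_cast
      linear_combination ((t:ℚ) + 2*q*d) * ht2 - (d:ℚ) * hk
    exact_mod_cast h'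
  have hsqZ : Squarefree (d : ℤ) := Int.squarefree_natCast.mpr hd
  have hdvd : (d : ℤ) ∣ t := (hsqZ.dvd_pow_iff_dvd two_ne_zero).mp ⟨k, by rw [htk]; ring⟩
  obtain ⟨s, hts⟩ := hdvd
  have hd0 : (d : ℚ) ≠ 0 := Nat.cast_ne_zero.mpr (by omega)
  have hs2q : (s : ℚ) = 2*q := by
    have h' := ht2
    rw [hts] at h'
    push_cast at h'
    apply mul_left_cancel₀ hd0
    linear_combination h'
  -- main relation m² - s² d = 4n
  have hrel : m^2 - s^2 * (d:ℤ) = 4*n := by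
    have h' : ((m^2 - s^2*(d:ℤ) : ℤ) : ℚ) = ((4*n : ℤ) : ℚ) := by
      push_cast
      linear_combination ((m:ℚ) + 2*p) * hm2 - ((s:ℚ) + 2*q) * (d:ℚ) * hs2q - 4 * hn2
    exact_mod_cast h'
  have hsR : (s:ℝ) = 2*(q:ℝ) := by exact_mod_cast hs2q
  have htrR : ((Algebra.trace ℚ (Fd d) γ : ℚ) : ℝ) = 2*(p:ℝ) := by exact_mod_cast htr
  by_cases h4 : d % 4 = 1
  · -- m ≡ s (mod 2)
    have hpar : ∃ x : ℤ, m - s = 2*x := by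
      rcases Int.even_or_odd m with ⟨u, hu⟩ | ⟨u, hu⟩ <;>
        rcases Int.even_or_odd s with ⟨v, hv⟩ | ⟨v, hv⟩
      · exact ⟨u - v, by omega⟩
      · exfalso
        rw [hu, hv] at hrel
        obtain ⟨c, hc⟩ : (4:ℤ) ∣ (d:ℤ) :=
          ⟨u*u - v*v*(d:ℤ) - v*(d:ℤ) - n, by linear_combination -hrel⟩
        omega
      · exfalso
        rw [hu, hv] at hrel
        obtain ⟨c, hc⟩ : ∃ c : ℤ, (1:ℤ) = 4*c :=
          ⟨n + v*v*(d:ℤ) - u*u - u, by linear_combination hrel⟩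
        omega
      · exact ⟨u - v, by omega⟩
    obtain ⟨x, hx⟩ := hpar
    have hxq : (x:ℚ) = p - q := by
      have h' : ((m - s : ℤ) : ℚ) = ((2*x : ℤ) : ℚ) := by rw [hx]
      push_cast at h'
      linarith [hm2, hs2q]
    have hxR : (x:ℝ) = (p:ℝ) - q := by exact_mod_cast hxq
    refine ⟨x, s, ?_, ?_⟩
    · simp only [omegaR, if_pos h4]
      rw [hpq, hxR, hsR]; ring
    · unfold conjR
      rw [htrR, hpq]
      simp only [omegaConjR, if_pos h4]
      rw [hxR, hsR]; ring
  · -- both m and s are even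
    have h4d : ¬ (4 ∣ d) := not_four_dvd hd
    have hpar : ∃ u v : ℤ, m = 2*u ∧ s = 2*v := by
      rcases Int.even_or_odd m with ⟨u, hu⟩ | ⟨u, hu⟩ <;>
        rcases Int.even_or_odd s with ⟨v, hv⟩ | ⟨v, hv⟩
      · exact ⟨u, v, by omega, by omega⟩
      · exfalso
        rw [hu, hv] at hrel
        obtain ⟨c, hc⟩ : (4:ℤ) ∣ (d:ℤ) :=
          ⟨u*u - v*v*(d:ℤ) - v*(d:ℤ) - n, by linear_combination -hrel⟩
        omega
      · exfalso
        rw [hu, hv] at hrel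
        obtain ⟨c, hc⟩ : ∃ c : ℤ, (1:ℤ) = 4*c :=
          ⟨n + v*v*(d:ℤ) - u*u - u, by linear_combination hrel⟩
        omega
      · exfalso
        rw [hu, hv] at hrel
        obtain ⟨c, hc⟩ : ∃ c : ℤ, (d:ℤ) = 1 + 4*c :=
          ⟨u*u + u - n - v*v*(d:ℤ) - v*(d:ℤ), by linear_combination -hrel⟩
        omega
    obtain ⟨u, v, hu, hv⟩ := hpar
    have huq : (u:ℚ) = p := by
      have h' : ((m : ℤ) : ℚ) = ((2*u : ℤ) : ℚ) := by rw [hu]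
      push_cast at h'
      linarith [hm2]
    have hvq : (v:ℚ) = q := by
      have h' : ((s : ℤ) : ℚ) = ((2*v : ℤ) : ℚ) := by rw [hv]
      push_cast at h'
      linarith [hs2q]
    have huR : (u:ℝ) = (p:ℝ) := by exact_mod_cast huq
    have hvR : (v:ℝ) = (q:ℝ) := by exact_mod_cast hvq
    refine ⟨u, v, ?_, ?_⟩
    · simp only [omegaR, if_neg h4]
      rw [hpq, huR, hvR]
    · unfold conjR
      rw [htrR, hpq]
      simp only [omegaConjR, if_neg h4]
      rw [huR, hvR]; ring

lemma sqrt_Delta (hd1 : 1 < d) : Real.sqrt (Delta d) = omegaR d - omegaConjR d := by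
  unfold Delta omegaR omegaConjR
  by_cases h4 : d % 4 = 1
  · simp only [if_pos h4]; ring
  · simp only [if_neg h4]
    have h' : ((4*d : ℕ) : ℝ) = 2^2 * d := by push_cast; ring
    rw [h', Real.sqrt_mul (by positivity), Real.sqrt_sq (by norm_num)]
    ring

lemma omega_irr (hirr : Irrational (Real.sqrt d)) : Irrational (omegaR d) := by
  unfold omegaR
  by_cases h4 : d % 4 = 1
  · simp only [if_pos h4]
    have h1 : Irrational (((1:ℚ):ℝ) + Real.sqrt d) := hirr.ratCast_add 1
    have h2 := h1.div_natCast (m := 2) (by norm_num)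
    simpa using h2
  · simpa only [if_neg h4] using hirr

end Aux

theorem exists_unique_floor_rep
    (d : ℕ) (hd : Squarefree d) (hd1 : 1 < d)
    (γ : Fd d) (hγ : γ ∈ integralClosure ℤ (Fd d))
    (h0 : 0 ≤ conjR γ) (h1 : conjR γ < 1) :
    ∃ a : ℤ,
      ((γ : ℝ) = ((-⌊(a : ℝ) * omegaConjR d⌋ : ℤ) : ℝ) + (a : ℝ) * omegaR d) ∧
      0 ≤ (γ : ℝ) - (a : ℝ) * Real.sqrt (Delta d) ∧
      (γ : ℝ) - (a : ℝ) * Real.sqrt (Delta d) ≤ 1 ∧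
      ∀ b : ℤ,
        ((γ : ℝ) = ((-⌊(b : ℝ) * omegaConjR d⌋ : ℤ) : ℝ) + (b : ℝ) * omegaR d) →
        b = a := by
  have hirr := Aux.irr hd hd1
  obtain ⟨x, a, hx, hconj⟩ := Aux.int_rep hd hd1 γ hγ
  have hfloor : ⌊(a:ℝ) * omegaConjR d⌋ = -x := by
    have h' : (a:ℝ) * omegaConjR d = conjR γ - x := by rw [hconj]; ring
    rw [h', Int.floor_sub_intCast, Int.floor_eq_zero_iff.mpr ⟨h0, h1⟩]
    ring
  have hΔ := Aux.sqrt_Delta (d := d) hd1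
  have hga : (γ : ℝ) = ((-⌊(a : ℝ) * omegaConjR d⌋ : ℤ) : ℝ) + (a : ℝ) * omegaR d := by
    rw [hx, hfloor]
    push_cast
    ring
  have hval : (γ:ℝ) - (a:ℝ) * Real.sqrt (Delta d) = conjR γ := by
    rw [hΔ, hx, hconj]; ring
  refine ⟨a, hga, by rw [hval]; exact h0, by rw [hval]; linarith, ?_⟩
  intro b hb
  by_contra hba
  apply Aux.omega_irr (d := d) hirr
  have h1' := hga.symm.trans hb
  push_cast at h1'
  refine ⟨((⌊(b:ℝ) * omegaConjR d⌋ - ⌊(a:ℝ) * omegaConjR d⌋ : ℤ):ℚ)/((b - a : ℤ):ℚ), ?_⟩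
  have hbaR : ((b:ℝ) - a) ≠ 0 := by
    intro h
    apply hba
    have : (b:ℝ) = a := by linarith
    exact_mod_cast this
  push_cast
  rw [div_eq_iff hbaR]
  linear_combination h1'
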